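/- Let A be a finite set and let X ⊆ A^ℤ be a W-subshift. Then the set of periodic configurations in X is dense in X; equivalently, every word w ∈ L(X) appears as a subword of some periodic configuration belonging to X. -/

import Mathlib

/-- The shift action of `ℤ` on configurations `x : ℤ → A`: `(n • x)(m) = x(m - n)`. -/
def shiftZ {A : Type*} (n : ℤ) (x : ℤ → A) : ℤ → A :=
  fun m => x (m - n)

/-- A subshift is a closed, shift-invariant subset of `A^ℤ` (with the prodiscrete
topology). -/
def IsSubshiftZ {A : Type*} [TopologicalSpace A] (X : Set (ℤ → A)) : Prop :=
  IsClosed X ∧ ∀ (n : ℤ) (x : ℤ → A), x ∈ X → shiftZ n x ∈ X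

/-- A configuration is periodic if its orbit under the shift action is finite. -/
def IsPeriodicZ {A : Type*} (x : ℤ → A) : Prop :=
  (Set.range fun n : ℤ => shiftZ n x).Finite

/-- A subshift `X ⊆ A^ℤ` is strongly irreducible if there is a finite `Δ ⊆ ℤ` such
that whenever `Ω₁, Ω₂` are finite subsets of `ℤ` with `(Ω₁ - Δ) ∩ Ω₂ = ∅`, any two
configurations of `X` can be glued along `Ω₁` and `Ω₂` inside `X`. -/
def IsStronglyIrreducibleZ {A : Type*} (X : Set (ℤ → A)) : Prop :=
  ∃ Δ : Finset ℤ, ∀ Ω₁ Ω₂ : Finset ℤ,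
    (∀ a ∈ Ω₁, ∀ d ∈ Δ, a - d ∉ Ω₂) →
    ∀ x₁ ∈ X, ∀ x₂ ∈ X, ∃ x ∈ X,
      (∀ i ∈ Ω₁, x i = x₁ i) ∧ (∀ i ∈ Ω₂, x i = x₂ i)

/-- The word `w` appears as a subword of the configuration `x : ℤ → A`. -/
def AppearsIn {A : Type*} (w : List A) (x : ℤ → A) : Prop :=
  ∃ i : ℤ, ∀ k : Fin w.length, x (i + (k.1 : ℤ)) = w.get k

/-- The language of `X ⊆ A^ℤ`: all finite words appearing in configurations of `X`. -/
def lang {A : Type*} (X : Set (ℤ → A)) : Set (List A) :=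
  {w : List A | ∃ x ∈ X, AppearsIn w x}

/-- `X ⊆ A^ℤ` is a W-subshift if there is `n₀ ≥ 0` such that any two words of its
language can be joined, within the language, by a word of length at most `n₀`. -/
def IsWSubshift {A : Type*} (X : Set (ℤ → A)) : Prop :=
  ∃ n₀ : ℕ, ∀ u ∈ lang X, ∀ v ∈ lang X,
    ∃ c ∈ lang X, c.length ≤ n₀ ∧ u ++ c ++ v ∈ lang X

namespace WProof

variable {A : Type*}

lemma appearsIn_infix {w w' : List A} {x : ℤ → A} (h : AppearsIn w x) (hw : w' <:+: w) :
    AppearsIn w' x := by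
  obtain ⟨s, t, rfl⟩ := hw
  obtain ⟨i, hi⟩ := h
  refine ⟨i + s.length, fun k => ?_⟩
  have hk : s.length + k.1 < (s ++ w' ++ t).length := by
    simp [List.length_append]; omega
  have h2 := hi ⟨s.length + k.1, hk⟩
  have e1 : i + (s.length : ℤ) + (k.1 : ℤ) = i + ((s.length + k.1 : ℕ) : ℤ) := by push_cast; ring
  rw [e1, h2]
  simp [List.get_eq_getElem]

lemma lang_infix {X : Set (ℤ → A)} {w w' : List A} (h : w ∈ lang X) (hw : w' <:+: w) :
    w' ∈ lang X := by
  obtain ⟨x, hx, ha⟩ := h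
  exact ⟨x, hx, appearsIn_infix ha hw⟩

/-- The word `u (c u)^k`. -/
def pw (u c : List A) : ℕ → List A
  | 0 => u
  | k+1 => pw u c k ++ c ++ u

lemma pw_length (u c : List A) (k : ℕ) :
    (pw u c k).length = k * (u.length + c.length) + u.length := by
  induction k with
  | zero => simp [pw]
  | succ k ih => simp [pw, ih]; ring

lemma prefix_pw_succ (u c : List A) (k : ℕ) : pw u c k <+: pw u c (k+1) :=
  ⟨c ++ u, (List.append_assoc _ _ _).symm⟩

lemma pw_prefix_pw (u c : List A) {k j : ℕ} (h : k ≤ j) : pw u c k <+: pw u c j := by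
  induction j with
  | zero => simp_all
  | succ j ih =>
    rcases Nat.lt_or_ge k (j+1) with h' | h'
    · exact (ih (by omega)).trans (prefix_pw_succ u c j)
    · have : k = j + 1 := by omega
      subst this; rfl

lemma prefix_pw (u c : List A) (k : ℕ) : u <+: pw u c k :=
  (pw_prefix_pw u c (Nat.zero_le k) : pw u c 0 <+: pw u c k)

lemma suffix_pw (u c : List A) (k : ℕ) : u <:+ pw u c k := by
  cases k with
  | zero => rfl
  | succ k => exact List.suffix_append (pw u c k ++ c) u

lemma pw_add (u c : List A) (k j : ℕ) :
    pw u c k ++ c ++ pw u c j = pw u c (k + j + 1) := by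
  induction j with
  | zero => rfl
  | succ j ih =>
    show pw u c k ++ c ++ (pw u c j ++ c ++ u) = pw u c (k + j + 1) ++ c ++ u
    rw [← ih]
    simp [List.append_assoc]

lemma pw_getElem (u c : List A) (hu : 0 < u.length) (k t : ℕ) (ht : t < (pw u c k).length)
    (h2 : t % (u ++ c).length < (u ++ c).length) :
    (pw u c k)[t] = (u ++ c)[t % (u ++ c).length] := by
  set p := u.length + c.length with hp
  have hpp : (u ++ c).length = p := by simp [hp]
  have hp0 : 0 < p := by omega
  induction k with
  | zero =>
    have ht' : t < u.length := by simpa [pw] using ht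
    have hmod : t % (u ++ c).length = t := by
      rw [hpp]; exact Nat.mod_eq_of_lt (by omega)
    show u[t]'ht' = _
    simp only [hmod]
    rw [List.getElem_append_left ht']
  | succ k ih =>
    have hlk : (pw u c k).length = k * p + u.length := pw_length u c k
    have hmul : (k+1) * p = k * p + p := by ring
    have hcl : (pw u c k ++ c).length = (k+1) * p := by simp [hlk]; omega
    show ((pw u c k ++ c) ++ u)[t]'(by simpa [pw] using ht) = _
    have hlk1 : (pw u c (k+1)).length = k * p + p + u.length := by
      rw [pw_length u c (k+1), ← hp]; ring
    have htt : t < (k+1) * p + u.length := by omega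
    rcases Nat.lt_or_ge t (pw u c k).length with h1 | h1
    · rw [List.getElem_append_left (by omega : t < (pw u c k ++ c).length),
          List.getElem_append_left h1]
      exact ih (by omega)
    · rcases Nat.lt_or_ge t ((k+1) * p) with h2' | h2'
      · set s := t - (k * p + u.length) with hsdef
        have hsc : s < c.length := by omega
        rw [List.getElem_append_left (by omega : t < (pw u c k ++ c).length),
            List.getElem_append_right h1]
        have hts : t = (u.length + s) + k * p := by omega
        have hmod : t % (u ++ c).length = u.length + s := by
          rw [hpp, hts, Nat.add_mul_mod_self_right, Nat.mod_eq_of_lt (by omega)]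
        simp only [hmod]
        rw [List.getElem_append_right (by omega : u.length ≤ u.length + s)]
        congr 1
        omega
      · set s := t - (k+1) * p with hsdef
        have hsu : s < u.length := by omega
        rw [List.getElem_append_right (by omega : (pw u c k ++ c).length ≤ t)]
        have hts : t = s + (k+1) * p := by omega
        have hmod : t % (u ++ c).length = s := by
          rw [hpp, hts, Nat.add_mul_mod_self_right, Nat.mod_eq_of_lt (by omega)]
        simp only [hmod]
        rw [List.getElem_append_left hsu]
        congr 1
        omega

/-- The set of possible "bridges" from `u` to itself. -/
def Cset (X : Set (ℤ → A)) (n₀ : ℕ) (u : List A) : Set (List A) :=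
  {c | c.length ≤ n₀ ∧ u ++ c ++ u ∈ lang X}

lemma Cset_finite [Finite A] (X : Set (ℤ → A)) (n₀ : ℕ) (u : List A) :
    (Cset X n₀ u).Finite :=
  (List.finite_length_le A n₀).subset fun _ hc => hc.1

/-- The combinatorial core: by a descent on the finite set of available bridges,
some extension `u'` of `u` admits a bridge `c'` all of whose powers stay in the
language. -/
lemma core [Finite A] (X : Set (ℤ → A)) (n₀ : ℕ)
    (hW : ∀ u ∈ lang X, ∀ v ∈ lang X, ∃ c ∈ lang X, c.length ≤ n₀ ∧ u ++ c ++ v ∈ lang X) :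
    ∀ (n : ℕ) (u : List A), u ∈ lang X → (Cset X n₀ u).ncard ≤ n →
      ∃ u' c', u <+: u' ∧ ∀ k, pw u' c' k ∈ lang X := by
  intro n
  induction n with
  | zero =>
    intro u hu hcard
    obtain ⟨c, _, hclen, hmem⟩ := hW u hu u hu
    have hce : Cset X n₀ u = ∅ :=
      (Set.ncard_eq_zero (Cset_finite X n₀ u)).mp (Nat.le_zero.mp hcard)
    have hcmem : c ∈ Cset X n₀ u := ⟨hclen, hmem⟩
    rw [hce] at hcmem
    exact hcmem.elim
  | succ n ih =>
    intro u hu hcard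
    obtain ⟨c, _, hclen, hmem⟩ := hW u hu u hu
    by_cases hall : ∀ k, pw u c k ∈ lang X
    · exact ⟨u, c, List.prefix_rfl, hall⟩
    · classical
      push_neg at hall
      have hex : ∃ k, pw u c k ∉ lang X := hall
      set k₀ := Nat.find hex with hk₀def
      have hk₀ : pw u c k₀ ∉ lang X := Nat.find_spec hex
      have hlt : ∀ j, j < k₀ → pw u c j ∈ lang X := fun j hj => by
        by_contra h
        have hle : k₀ ≤ j := hk₀def ▸ Nat.find_le h
        omega
      have h0 : pw u c 0 ∈ lang X := hu
      have h1 : pw u c 1 ∈ lang X := by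
        show pw u c 0 ++ c ++ u ∈ lang X
        exact hmem
      have hk₀2 : 2 ≤ k₀ := by
        rcases Nat.lt_or_ge k₀ 2 with h | h
        · interval_cases k₀ <;> simp_all
        · exact h
      set u₁ := pw u c (k₀ - 1) with hu₁def
      have hu₁ : u₁ ∈ lang X := hlt _ (by omega)
      have hupre : u <+: u₁ := prefix_pw u c _
      have husuf : u <:+ u₁ := suffix_pw u c _
      have hCsub : Cset X n₀ u₁ ⊆ Cset X n₀ u := by
        rintro d ⟨hd1, hd2⟩
        refine ⟨hd1, ?_⟩
        obtain ⟨ρ, hρ⟩ := hupre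
        obtain ⟨lam, hlam⟩ := husuf
        refine lang_infix hd2 ⟨lam, ρ, ?_⟩
        have he : lam ++ (u ++ d ++ u) ++ ρ = (lam ++ u) ++ d ++ (u ++ ρ) := by
          simp [List.append_assoc]
        rw [he, hlam, hρ]
      have hcnot : c ∉ Cset X n₀ u₁ := by
        rintro ⟨-, hcu⟩
        have heq : u₁ ++ c ++ u₁ = pw u c (2 * k₀ - 1) := by
          rw [hu₁def, pw_add]
          congr 1
          omega
        have : pw u c k₀ ∈ lang X :=
          lang_infix (heq ▸ hcu) (pw_prefix_pw u c (by omega)).isInfix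
        exact hk₀ this
      have hss : Cset X n₀ u₁ ⊂ Cset X n₀ u := by
        rw [Set.ssubset_def]
        exact ⟨hCsub, fun hsub => hcnot (hsub ⟨hclen, hmem⟩)⟩
      have hlt' : (Cset X n₀ u₁).ncard < (Cset X n₀ u).ncard :=
        Set.ncard_lt_ncard hss (Cset_finite X n₀ u)
      obtain ⟨u', c', hpre, hpow⟩ := ih u₁ hu₁ (by omega)
      exact ⟨u', c', hupre.trans hpre, hpow⟩

lemma mem_of_windows [TopologicalSpace A] [DiscreteTopology A]
    {X : Set (ℤ → A)} (hX : IsSubshiftZ X) (x : ℤ → A)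
    (h : ∀ n : ℕ, ∃ y ∈ X, ∀ m : ℤ, m.natAbs ≤ n → y m = x m) : x ∈ X := by
  choose y hyX hy using h
  have ht : Filter.Tendsto y Filter.atTop (nhds x) := by
    rw [tendsto_pi_nhds]
    intro m
    refine Filter.Tendsto.congr' ?_ tendsto_const_nhds
    filter_upwards [Filter.eventually_ge_atTop m.natAbs] with n hn
    exact (hy n m hn).symm
  exact hX.1.mem_of_tendsto ht (Filter.Eventually.of_forall hyX)

set_option linter.unnecessarySeqFocus false in
lemma exists_periodic_of_pows [TopologicalSpace A] [DiscreteTopology A]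
    {X : Set (ℤ → A)} (hX : IsSubshiftZ X)
    (u c : List A) (hu : 0 < u.length) (hpow : ∀ k, pw u c k ∈ lang X) :
    ∃ z ∈ X, IsPeriodicZ z ∧ ∀ (t : ℕ) (ht : t < u.length), z (t : ℤ) = u[t] := by
  classical
  set P := u ++ c with hPdef
  set p := P.length with hpdef
  have hple : u.length ≤ p ∧ 0 < p := by
    constructor <;> simp [hpdef, hPdef] <;> omega
  have hp0 : 0 < p := hple.2
  have hpz : (p : ℤ) ≠ 0 := by exact_mod_cast hp0.ne'
  have hpz' : (0:ℤ) < (p:ℤ) := by exact_mod_cast hp0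
  have hidx : ∀ m : ℤ, (m % (p:ℤ)).toNat < p := fun m => by
    have h1 := Int.emod_nonneg m hpz
    have h2 := Int.emod_lt_of_pos m hpz'
    omega
  set z : ℤ → A := fun m => P[(m % (p:ℤ)).toNat]'(hidx m) with hzdef
  have hmod : ∀ m : ℤ, ∀ s : ℕ, m % (p:ℤ) = ((s % p : ℕ) : ℤ) →
      z m = P[s % p]'(Nat.mod_lt _ hp0) := by
    intro m s he
    show P[(m % (p:ℤ)).toNat]'(hidx m) = _
    have : (m % (p:ℤ)).toNat = s % p := by rw [he]; exact Int.toNat_natCast _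
    simp only [this]
  have hshift : ∀ n : ℤ, shiftZ n z = shiftZ (n % p) z := by
    intro n
    funext m
    show z (m - n) = z (m - n % (p:ℤ))
    have hsplit : (p:ℤ) * (n / p) + n % p = n := Int.mul_ediv_add_emod n p
    have : m - n = (m - n % (p:ℤ)) + (p:ℤ) * (-(n / p)) := by ring_nf; omega
    rw [this]
    show P[_]'_ = P[_]'_
    congr 1
    congr 1
    apply Int.add_mul_emod_self_left
  have hper : IsPeriodicZ z := by
    apply Set.Finite.subset (Set.Finite.image (fun j => shiftZ j z) (Set.finite_Icc (0:ℤ) (p-1)))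
    rintro _ ⟨n, rfl⟩
    refine ⟨n % p, ?_, (hshift n).symm⟩
    have h1 := Int.emod_nonneg n hpz
    have h2 := Int.emod_lt_of_pos n hpz'
    simp [Set.mem_Icc]; omega
  have hmem : z ∈ X := by
    apply mem_of_windows hX
    intro n
    obtain ⟨y₀, hy₀X, i₀, hi₀⟩ := hpow (2*n+1)
    set r := ((-(n:ℤ)) % (p:ℤ)).toNat with hrdef
    have hr : r < p := hidx _
    have hrm : ((r:ℕ) : ℤ) = (-(n:ℤ)) % (p:ℤ) :=
      Int.toNat_of_nonneg (Int.emod_nonneg _ hpz)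
    refine ⟨shiftZ (-(i₀ + r + n)) y₀, hX.2 _ _ hy₀X, ?_⟩
    intro m hm
    set t := (m + n).toNat with htdef
    have htm : (t : ℤ) = m + n := Int.toNat_of_nonneg (by omega)
    have htl : t ≤ 2*n := by omega
    have hlen : r + t < (pw u c (2*n+1)).length := by
      rw [pw_length]
      have h1 : u.length + c.length = p := by simp [hpdef, hPdef]
      have h2 : t ≤ 2*n*p := le_trans htl (Nat.le_mul_of_pos_right _ hp0)
      have : (2*n+1) * (u.length + c.length) = 2*n*p + p := by rw [h1]; ring
      omega
    have hy : shiftZ (-(i₀ + r + n)) y₀ m = y₀ (i₀ + ((r + t : ℕ) : ℤ)) := by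
      show y₀ (m - (-(i₀ + r + n))) = _
      congr 1
      push_cast
      omega
    have happ := hi₀ ⟨r + t, hlen⟩
    have hsplit : (p:ℤ) * ((-(n:ℤ)) / p) + (-(n:ℤ)) % p = -(n:ℤ) := Int.mul_ediv_add_emod _ _
    have hzm : z m = P[(r + t) % p]'(Nat.mod_lt _ hp0) := by
      apply hmod
      have hsplit2 : ((-(n:ℤ)) / p) * (p:ℤ) + ((r:ℕ):ℤ) = -(n:ℤ) := by
        rw [mul_comm, hrm]; exact hsplit
      have h1 : m = ((r:ℤ) + t) + ((-(n:ℤ)) / p) * (p:ℤ) := by omega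
      rw [h1, Int.add_mul_emod_self_right]
      push_cast
      ring
    have happ' : y₀ (i₀ + ((r + t : ℕ) : ℤ)) = (pw u c (2*n+1))[r+t]'hlen := by
      simpa [List.get_eq_getElem] using happ
    have hpg := pw_getElem u c hu (2*n+1) (r+t) hlen (Nat.mod_lt _ hp0)
    rw [hy, happ', hpg]
    exact hzm.symm
  refine ⟨z, hmem, hper, ?_⟩
  intro t ht
  have h1 : ((t:ℤ) % (p:ℤ)) = ((t % p : ℕ) : ℤ) := by
    rw [Nat.mod_eq_of_lt (by omega)]
    exact Int.emod_eq_of_lt (by omega) (by exact_mod_cast (by omega : t < p))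
  have h2 := hmod (t : ℤ) t h1
  rw [h2]
  have h3 : t % p = t := Nat.mod_eq_of_lt (by omega)
  simp only [h3]
  show (u ++ c)[t]'_ = u[t]'ht
  rw [List.getElem_append_left ht]

lemma shiftZ_shiftZ (a b : ℤ) (x : ℤ → A) : shiftZ a (shiftZ b x) = shiftZ (a + b) x := by
  funext m
  show x (m - a - b) = x (m - (a + b))
  congr 1
  ring

lemma isPeriodicZ_shift {x : ℤ → A} (h : IsPeriodicZ x) (s : ℤ) :
    IsPeriodicZ (shiftZ s x) := by
  apply h.subset
  rintro _ ⟨n, rfl⟩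
  exact ⟨n + s, (shiftZ_shiftZ n s x).symm⟩

end WProof

/-- If `X ⊆ A^ℤ` is a W-subshift, then the periodic configurations of `X` are dense
in `X`; equivalently, every word of the language of `X` appears as a subword of some
periodic configuration belonging to `X`. -/
theorem dense_periodic_of_W
    {A : Type*} [Finite A] [TopologicalSpace A] [DiscreteTopology A]
    (X : Set (ℤ → A)) (hX : IsSubshiftZ X) (hW : IsWSubshift X) :
    X ⊆ closure {x ∈ X | IsPeriodicZ x} ∧
      ∀ w ∈ lang X, ∃ x ∈ X, IsPeriodicZ x ∧ AppearsIn w x := by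
  obtain ⟨n₀, hW⟩ := hW
  have main : ∀ w ∈ lang X, 0 < w.length →
      ∃ z ∈ X, IsPeriodicZ z ∧ ∀ (t : ℕ) (ht : t < w.length), z (t : ℤ) = w[t] := by
    intro w hw hwlen
    obtain ⟨u', c', hpre, hpow⟩ :=
      WProof.core X n₀ hW (WProof.Cset X n₀ w).ncard w hw le_rfl
    obtain ⟨ρ, hρ⟩ := hpre
    subst hρ
    have hu'len : 0 < (w ++ ρ).length := by simp; omega
    obtain ⟨z, hzX, hzper, hzeval⟩ := WProof.exists_periodic_of_pows hX _ c' hu'len hpow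
    refine ⟨z, hzX, hzper, ?_⟩
    intro t ht
    have ht' : t < (w ++ ρ).length := by simp; omega
    rw [hzeval t ht']
    exact List.getElem_append_left ht
  constructor
  · -- density of periodic configurations
    intro x hx
    have hz : ∀ n : ℕ, ∃ z, (z ∈ X ∧ IsPeriodicZ z) ∧ ∀ m : ℤ, m.natAbs ≤ n → z m = x m := by
      intro n
      set w : List A := (List.range (2*n+1)).map (fun t : ℕ => x ((t:ℤ) - (n:ℤ))) with hwdef
      have hwlen : w.length = 2*n+1 := by simp [hwdef]
      have hwL : w ∈ lang X := by
        refine ⟨x, hx, -(n:ℤ), fun k => ?_⟩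
        have hget : w.get k = x ((k.1 : ℤ) - n) := by
          simp [hwdef, List.get_eq_getElem]
        rw [hget]
        congr 1
        ring
      obtain ⟨z, hzX, hzper, hzeval⟩ := main w hwL (by omega)
      refine ⟨shiftZ (-(n:ℤ)) z, ⟨hX.2 _ _ hzX, WProof.isPeriodicZ_shift hzper _⟩, ?_⟩
      intro m hm
      show z (m - (-(n:ℤ))) = x m
      set t := (m + n).toNat with htdef
      have htm : (t : ℤ) = m + n := Int.toNat_of_nonneg (by omega)
      have ht : t < w.length := by omega
      have he : z (t : ℤ) = w[t] := hzeval t ht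
      have hw : w[t] = x ((t : ℤ) - n) := by
        simp [hwdef]
      rw [show m - (-(n:ℤ)) = (t : ℤ) by omega, he, hw]
      congr 1
      omega
    choose z hzS hznear using hz
    have ht : Filter.Tendsto z Filter.atTop (nhds x) := by
      rw [tendsto_pi_nhds]
      intro m
      refine Filter.Tendsto.congr' ?_ tendsto_const_nhds
      filter_upwards [Filter.eventually_ge_atTop m.natAbs] with n hn
      exact (hznear n m hn).symm
    exact mem_closure_of_tendsto ht
      (Filter.Eventually.of_forall fun n => ⟨(hzS n).1, (hzS n).2⟩)
  · -- every word of the language appears in a periodic configuration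
    intro w hw
    by_cases hlen : 0 < w.length
    · obtain ⟨z, hzX, hzper, he⟩ := main w hw hlen
      refine ⟨z, hzX, hzper, 0, fun k => ?_⟩
      have := he k.1 k.2
      simpa [List.get_eq_getElem] using this
    · obtain ⟨x₀, hx₀, -⟩ := hw
      have h1 : [x₀ 0] ∈ lang X := by
        refine ⟨x₀, hx₀, 0, fun k => ?_⟩
        have hk : k.1 = 0 := by
          have h2 := k.isLt
          have h3 : [x₀ 0].length = 1 := rfl
          omega
        simp [List.get_eq_getElem, hk]
      obtain ⟨z, hzX, hzper, -⟩ := main [x₀ 0] h1 (by simp)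
      have hwnil : w = [] := by
        cases w with
        | nil => rfl
        | cons a l => simp at hlen
      subst hwnil
      exact ⟨z, hzX, hzper, 0, fun k => absurd k.2 (by simp)⟩
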